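/- arXiv:1806.06141 — 2 statements merged into one kernel-verified Lean document; each statement's English description precedes it below -/
import Mathlib

section
/- Let T be a bounded operator on a complex Hilbert space H with polar decomposition T = U|T|, and let n ∈ ℕ be such that T is (n+1)-centered. Then for every k with 1 ≤ k ≤ n, U^k(U^k)^* commutes with |T| and (U^k)^*U^k commutes with |T^*|. -/
open ContinuousLinearMap

variable {H : Type*} [NormedAddCommGroup H] [InnerProductSpace ℂ H] [CompleteSpace H]

/-- The absolute value `|T| = (T^*T)^(1/2)` of a bounded operator on a complex
Hilbert space, defined via the continuous functional calculus. -/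
noncomputable def absOp (T : H →L[ℂ] H) : H →L[ℂ] H :=
  cfc Real.sqrt (adjoint T * T)

/-- The orthogonal projection of `H` onto the closure of the range of `T`,
regarded as an operator on `H`. -/
noncomputable def rangeProjOp (T : H →L[ℂ] H) : H →L[ℂ] H :=
  (LinearMap.range (T : H →ₗ[ℂ] H)).topologicalClosure.subtypeL ∘L
    Submodule.orthogonalProjectionOnto (LinearMap.range (T : H →ₗ[ℂ] H)).topologicalClosure

/-- `U` is a partial isometry: `U^*U` is an orthogonal projection
(a self-adjoint idempotent). -/
def IsPartialIsometryOp (U : H →L[ℂ] H) : Prop :=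
  IsSelfAdjoint (adjoint U * U) ∧ (adjoint U * U) * (adjoint U * U) = adjoint U * U

/-- `T = U|T|` is the polar decomposition of `T`: `U` is a partial isometry and
`U^*U` is the orthogonal projection onto the closure of the range of `T^*`. -/
def IsPolarDecompositionOp (T U : H →L[ℂ] H) : Prop :=
  T = U * absOp T ∧ IsPartialIsometryOp U ∧ adjoint U * U = rangeProjOp (adjoint T)

/-- `T` (with polar decomposition `T = U|T|`) is `n`-centered: for every
`1 ≤ k ≤ n`, `T^k = U^k |T^k|` is the polar decomposition of `T^k`. -/
def IsNCentered (n : ℕ) (T U : H →L[ℂ] H) : Prop :=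
  ∀ k : ℕ, 1 ≤ k → k ≤ n → IsPolarDecompositionOp (T ^ k) (U ^ k)

namespace PolarAux

lemma absOp_nonneg (T : H →L[ℂ] H) : 0 ≤ absOp T := cfc_nonneg fun x _ => Real.sqrt_nonneg x

lemma absOp_sa (T : H →L[ℂ] H) : IsSelfAdjoint (absOp T) := (absOp_nonneg T).isSelfAdjoint

lemma absOp_adjoint (T : H →L[ℂ] H) : adjoint (absOp T) = absOp T := (absOp_sa T).star_eq

lemma absOp_mul_self (T : H →L[ℂ] H) : absOp T * absOp T = adjoint T * T := by
  have hpos : (0:H →L[ℂ] H) ≤ adjoint T * T := by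
    rw [← star_eq_adjoint]; exact star_mul_self_nonneg T
  rw [absOp, ← cfc_mul ..]
  rw [cfc_congr (g := fun x : ℝ => x) fun x hx => Real.mul_self_sqrt (spectrum_nonneg_of_nonneg hpos hx)]
  exact cfc_id' ℝ _ (hpos.isSelfAdjoint)

set_option synthInstance.maxHeartbeats 1000000 in
lemma nonneg_sq_inj {a b : H →L[ℂ] H} (ha : 0 ≤ a) (hb : 0 ≤ b) (h : a * a = b * b) : a = b :=
  calc a = CFC.sqrt (a*a) := (CFC.sqrt_mul_self a ha).symm
  _ = CFC.sqrt (b*b) := by rw [h]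
  _ = b := CFC.sqrt_mul_self b hb

lemma rangeProj_apply (S : H →L[ℂ] H) (x : H) :
    rangeProjOp S x = (LinearMap.range (S : H →ₗ[ℂ] H)).topologicalClosure.starProjection x := rfl

lemma rangeProj_sa (S : H →L[ℂ] H) : IsSelfAdjoint (rangeProjOp S) :=
  isSelfAdjoint_starProjection _

lemma rangeProj_mem (S : H →L[ℂ] H) (x : H) :
    rangeProjOp S x ∈ (LinearMap.range (S : H →ₗ[ℂ] H)).topologicalClosure := by
  rw [rangeProj_apply]; exact SetLike.coe_mem _

lemma rangeProj_eq_self {S : H →L[ℂ] H} {x : H}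
    (hx : x ∈ (LinearMap.range (S : H →ₗ[ℂ] H)).topologicalClosure) : rangeProjOp S x = x := by
  rw [rangeProj_apply]; exact Submodule.starProjection_eq_self_iff.mpr hx

lemma rangeProj_comp_self (S : H →L[ℂ] H) : rangeProjOp S * S = S := by
  ext x
  exact rangeProj_eq_self (Submodule.le_topologicalClosure _ (LinearMap.mem_range_self _ x))

lemma mul_rangeProj_congr {X Y S : H →L[ℂ] H} (h : X * S = Y * S) :
    X * rangeProjOp S = Y * rangeProjOp S := by
  ext x
  have hmem : (rangeProjOp S x : H) ∈ closure ((LinearMap.range (S : H →ₗ[ℂ] H) : Submodule ℂ H) : Set H) := by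
    have := rangeProj_mem S x
    rwa [← Submodule.topologicalClosure_coe]
  have heq : Set.EqOn X Y ((LinearMap.range (S : H →ₗ[ℂ] H) : Submodule ℂ H) : Set H) := by
    rintro z ⟨y, rfl⟩
    exact congrArg (fun f : H →L[ℂ] H => f y) h
  have := heq.closure X.continuous Y.continuous hmem
  simpa using this

lemma orthogonal_range (R : H →L[ℂ] H) :
    (LinearMap.range (R : H →ₗ[ℂ] H))ᗮ = LinearMap.ker (adjoint R : H →ₗ[ℂ] H) := by
  ext x
  simp only [Submodule.mem_orthogonal, LinearMap.mem_ker, ContinuousLinearMap.coe_coe]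
  constructor
  · intro h
    rw [← inner_self_eq_zero (𝕜 := ℂ)]
    rw [adjoint_inner_left]
    exact (inner_eq_zero_symm.mp (h _ (LinearMap.mem_range_self _ _)))
  · intro h u hu
    obtain ⟨y, rfl⟩ := hu
    rw [ContinuousLinearMap.coe_coe, inner_eq_zero_symm, ← adjoint_inner_left, h, inner_zero_left]

lemma closure_range_eq_of_ker_adjoint_eq {R S : H →L[ℂ] H}
    (h : LinearMap.ker (adjoint R : H →ₗ[ℂ] H) = LinearMap.ker (adjoint S : H →ₗ[ℂ] H)) :
    (LinearMap.range (R : H →ₗ[ℂ] H)).topologicalClosure = (LinearMap.range (S : H →ₗ[ℂ] H)).topologicalClosure := by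
  rw [← Submodule.orthogonal_orthogonal_eq_closure, ← Submodule.orthogonal_orthogonal_eq_closure,
    orthogonal_range, orthogonal_range, h]

lemma ker_eq_ker_absOp (S : H →L[ℂ] H) :
    LinearMap.ker (S : H →ₗ[ℂ] H) = LinearMap.ker (absOp S : H →ₗ[ℂ] H) := by
  ext x
  simp only [LinearMap.mem_ker, ContinuousLinearMap.coe_coe]
  have key : (inner ℂ (S x) (S x) : ℂ) = inner ℂ (absOp S x) (absOp S x) := by
    calc (inner ℂ (S x) (S x) : ℂ) = inner ℂ ((adjoint S * S) x) x := by
          rw [ContinuousLinearMap.mul_apply, adjoint_inner_left]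
    _ = inner ℂ ((absOp S * absOp S) x) x := by rw [absOp_mul_self]
    _ = inner ℂ (absOp S x) (absOp S x) := by
          rw [ContinuousLinearMap.mul_apply]
          nth_rewrite 1 [← absOp_adjoint S]
          rw [adjoint_inner_left]
  have hnorm : ‖S x‖ ^ 2 = ‖absOp S x‖ ^ 2 := by
    rw [← inner_self_eq_norm_sq (𝕜 := ℂ), ← inner_self_eq_norm_sq (𝕜 := ℂ), key]
  have : ‖S x‖ = ‖absOp S x‖ := by
    nlinarith [norm_nonneg (S x), norm_nonneg (absOp S x)]
  constructor
  · intro h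
    rw [← norm_eq_zero, ← this, norm_eq_zero]; exact h
  · intro h
    rw [← norm_eq_zero, this, norm_eq_zero]; exact h

lemma rangeProj_congr {R S : H →L[ℂ] H}
    (h : (LinearMap.range (R : H →ₗ[ℂ] H)).topologicalClosure = (LinearMap.range (S : H →ₗ[ℂ] H)).topologicalClosure) :
    rangeProjOp R = rangeProjOp S := by
  ext x
  rw [rangeProj_apply, rangeProj_apply]
  exact Submodule.eq_starProjection_of_mem_orthogonal
    (by rw [h]; exact SetLike.coe_mem _)
    (by rw [h]; exact Submodule.sub_starProjection_mem_orthogonal x)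

lemma rangeProj_adjoint_eq (S : H →L[ℂ] H) :
    rangeProjOp (adjoint S) = rangeProjOp (absOp S) := by
  apply rangeProj_congr
  apply closure_range_eq_of_ker_adjoint_eq
  rw [adjoint_adjoint, absOp_adjoint, ker_eq_ker_absOp]


/-- reassociation helper -/
lemma tri {a b c : H →L[ℂ] H} (h : a * b = c) (x : H →L[ℂ] H) : a * (b * x) = c * x := by
  rw [← mul_assoc, h]

lemma pi_mul {V : H →L[ℂ] H} (hsa : IsSelfAdjoint (star V * V))
    (hid : (star V * V) * (star V * V) = star V * V) : V * (star V * V) = V := by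
  have h0 : star (V * (star V * V) - V) * (V * (star V * V) - V) = 0 := by
    have hs : star (V * (star V * V) - V) = (star V * V) * star V - star V := by
      rw [star_sub, star_mul, hsa.star_eq]
    rw [hs]
    have expand : ((star V * V) * star V - star V) * (V * (star V * V) - V)
        = (star V * V) * ((star V * V) * (star V * V)) - (star V * V) * (star V * V)
          - ((star V * V) * (star V * V)) + star V * V := by noncomm_ring
    rw [expand, hid, hid]
    abel
  have := (CStarRing.star_mul_self_eq_zero_iff _).mp h0
  exact sub_eq_zero.mp this

lemma pi_star_mul {V : H →L[ℂ] H} (h : V * (star V * V) = V) :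
    star V * (V * star V) = star V := by
  have := congrArg star h
  simpa [star_mul, star_star, mul_assoc] using this

lemma pi_idem_F {V : H →L[ℂ] H} (h : V * (star V * V) = V) :
    (V * star V) * (V * star V) = V * star V := by
  calc (V * star V) * (V * star V) = (V * (star V * V)) * star V := by
        simp only [mul_assoc]
  _ = V * star V := by rw [h]

lemma proj_comm {P Q : H →L[ℂ] H} (hP : IsSelfAdjoint P) (hQ : IsSelfAdjoint Q)
    (hPP : P * P = P) (hQQ : Q * Q = Q) (h : P * Q * (P * Q) = P * Q) :
    P * Q = Q * P := by
  have hP' : ∀ x : H →L[ℂ] H, P * (P * x) = P * x := fun x => by rw [← mul_assoc, hPP]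
  have hQ' : ∀ x : H →L[ℂ] H, Q * (Q * x) = Q * x := fun x => by rw [← mul_assoc, hQQ]
  have h' : ∀ x : H →L[ℂ] H, P * (Q * (P * (Q * x))) = P * (Q * x) := fun x => by
    calc P * (Q * (P * (Q * x))) = P * Q * (P * Q) * x := by simp only [mul_assoc]
    _ = P * Q * x := by rw [h]
    _ = P * (Q * x) := by rw [mul_assoc]
  have t1 : (P * Q) * (Q * P) = P * (Q * P) := by
    simp only [mul_assoc, hQ']
  have t2 : (P * Q) * (P * (Q * P)) = P * (Q * P) := by
    simp only [mul_assoc, h']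
  have t3 : (P * (Q * P)) * (Q * P) = P * (Q * P) := by
    simp only [mul_assoc, h']
  have t4 : (P * (Q * P)) * (P * (Q * P)) = P * (Q * P) := by
    simp only [mul_assoc, hP', h']
  have hX : (P * Q - P * (Q * P)) * star (P * Q - P * (Q * P)) = 0 := by
    have hs : star (P * Q - P * (Q * P)) = Q * P - P * (Q * P) := by
      simp only [star_sub, star_mul, hP.star_eq, hQ.star_eq, mul_assoc]
    rw [hs, mul_sub, sub_mul, sub_mul, t1, t2, t3, t4]
    abel
  have heq : P * Q = P * (Q * P) :=
    sub_eq_zero.mp ((CStarRing.mul_star_self_eq_zero_iff _).mp hX)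
  calc P * Q = P * (Q * P) := heq
  _ = star (P * (Q * P)) := by
      simp only [star_mul, hP.star_eq, hQ.star_eq, mul_assoc]
  _ = star (P * Q) := by rw [← heq]
  _ = Q * P := by rw [star_mul, hP.star_eq, hQ.star_eq]

lemma hw_comm {U V : H →L[ℂ] H} (hU : IsSelfAdjoint (star U * U))
    (hUid : (star U * U) * (star U * U) = star U * U)
    (hVpi : V * (star V * V) = V)
    (hWpi : (U * V) * (star (U * V) * (U * V)) = U * V) :
    (star U * U) * (V * star V) = (V * star V) * (star U * U) := by
  apply proj_comm hU (by simp only [IsSelfAdjoint, star_mul, star_star]) hUid (pi_idem_F hVpi)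
  have h2 := congrArg (fun x => star U * (x * star V)) hWpi
  simp only [star_mul, star_star, mul_assoc] at h2
  simp only [mul_assoc]
  exact h2

lemma proj_mul_abs {S V : H →L[ℂ] H} (h : IsPolarDecompositionOp S V) :
    (star V * V) * absOp S = absOp S := by
  rw [star_eq_adjoint, h.2.2, rangeProj_adjoint_eq]
  exact rangeProj_comp_self (absOp S)

lemma abs_mul_proj {S V : H →L[ℂ] H} (h : IsPolarDecompositionOp S V) :
    absOp S * (star V * V) = absOp S := by
  have := congrArg star (proj_mul_abs h)
  simpa [star_mul, star_star, (absOp_sa S).star_eq, mul_assoc] using this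

lemma star_mul_eq_abs {S V : H →L[ℂ] H} (h : IsPolarDecompositionOp S V) :
    star V * S = absOp S := by
  calc star V * S = star V * (V * absOp S) := by rw [← h.1]
  _ = (star V * V) * absOp S := by rw [mul_assoc]
  _ = absOp S := proj_mul_abs h

lemma pi_of_polar {S V : H →L[ℂ] H} (h : IsPolarDecompositionOp S V) :
    V * (star V * V) = V := by
  apply pi_mul
  · rw [star_eq_adjoint]; exact h.2.1.1
  · simp only [star_eq_adjoint]; exact h.2.1.2

lemma star_S_eq {S V : H →L[ℂ] H} (h : IsPolarDecompositionOp S V) :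
    star S = absOp S * star V := by
  have := congrArg star h.1
  rwa [star_mul, (absOp_sa S).star_eq] at this

lemma rangeProj_eq_proj {S V : H →L[ℂ] H} (h : IsPolarDecompositionOp S V) :
    rangeProjOp (absOp S) = star V * V := by
  rw [star_eq_adjoint, h.2.2, rangeProj_adjoint_eq]

lemma mul_star_eq_rangeProj {S V : H →L[ℂ] H} (h : IsPolarDecompositionOp S V) :
    V * star V = rangeProjOp S := by
  have h5 : V * (star V * V) = V := pi_of_polar h
  ext x
  show V (star V x) = rangeProjOp S x
  rw [rangeProj_apply]
  symm
  apply Submodule.eq_starProjection_of_mem_of_inner_eq_zero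
  · -- membership : V (star V x) ∈ (range S).topologicalClosure
    have hz : V (star V x) = V (rangeProjOp (absOp S) (star V x)) := by
      rw [rangeProj_eq_proj h]
      simpa [ContinuousLinearMap.mul_apply] using
        (congrArg (fun f : H →L[ℂ] H => f (star V x)) h5).symm
    rw [hz]
    have hzmem : (rangeProjOp (absOp S) (star V x) : H)
        ∈ closure ((LinearMap.range (absOp S : H →ₗ[ℂ] H) : Submodule ℂ H) : Set H) := by
      rw [← Submodule.topologicalClosure_coe]
      exact rangeProj_mem _ _
    have h6 : V '' ((LinearMap.range (absOp S : H →ₗ[ℂ] H) : Submodule ℂ H) : Set H)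
        ⊆ ((LinearMap.range (S : H →ₗ[ℂ] H) : Submodule ℂ H) : Set H) := by
      rintro - ⟨-, ⟨y, rfl⟩, rfl⟩
      exact ⟨y, by simpa [ContinuousLinearMap.mul_apply] using
        (congrArg (fun f : H →L[ℂ] H => f y) h.1.symm).symm⟩
    have h7 : V (rangeProjOp (absOp S) (star V x)) ∈
        closure ((LinearMap.range (S : H →ₗ[ℂ] H) : Submodule ℂ H) : Set H) := by
      have := image_closure_subset_closure_image (f := (V : H → H)) V.continuous
        (Set.mem_image_of_mem _ hzmem)
      exact closure_mono h6 this
    rw [← SetLike.mem_coe, Submodule.topologicalClosure_coe]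
    exact h7
  · -- orthogonality
    intro w hw
    have hsub : ((LinearMap.range (S : H →ₗ[ℂ] H) : Submodule ℂ H) : Set H)
        ⊆ {w | (inner ℂ (x - V (star V x)) w : ℂ) = 0} := by
      rintro - ⟨y, rfl⟩
      show (inner ℂ (x - V (star V x)) (S y) : ℂ) = 0
      rw [← adjoint_inner_left, map_sub]
      have hSV : (star S) * (V * star V) = star S := by
        rw [star_S_eq h, mul_assoc, pi_star_mul h5]
      have : adjoint S (V (star V x)) = adjoint S x := by
        have := congrArg (fun f : H →L[ℂ] H => f x) hSV
        simpa [star_eq_adjoint] using this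
      rw [this, sub_self, inner_zero_left]
    have hcl : IsClosed {w | (inner ℂ (x - V (star V x)) w : ℂ) = 0} :=
      isClosed_eq (Continuous.inner continuous_const continuous_id) continuous_const
    have hw' : w ∈ closure ((LinearMap.range (S : H →ₗ[ℂ] H) : Submodule ℂ H) : Set H) := by
      rwa [← Submodule.topologicalClosure_coe, SetLike.mem_coe]
    exact closure_minimal hsub hcl hw'

lemma polar_adjoint {S V : H →L[ℂ] H} (h : IsPolarDecompositionOp S V) :
    IsPolarDecompositionOp (adjoint S) (adjoint V) := by
  have h5 := pi_of_polar h
  have e2 : ∀ x, star V * (V * (absOp S * x)) = absOp S * x := fun x => by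
    rw [← mul_assoc]; exact tri (proj_mul_abs h) x
  have habs : absOp (adjoint S) = V * (absOp S * star V) := by
    apply nonneg_sq_inj (absOp_nonneg _)
    · have := star_right_conjugate_nonneg (absOp_nonneg S) V
      simpa [mul_assoc] using this
    · have key : (V * (absOp S * star V)) * (V * (absOp S * star V))
          = (V * absOp S) * (absOp S * star V) := by
        calc (V * (absOp S * star V)) * (V * (absOp S * star V))
            = V * (absOp S * (star V * (V * (absOp S * star V)))) := by simp only [mul_assoc]
        _ = V * (absOp S * (absOp S * star V)) := by rw [e2]
        _ = (V * absOp S) * (absOp S * star V) := by simp only [mul_assoc]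
      have e1 : adjoint S = absOp S * star V := by
        rw [← star_eq_adjoint]; exact star_S_eq h
      rw [absOp_mul_self (adjoint S), adjoint_adjoint, key]
      nth_rewrite 1 [h.1]
      rw [e1]
  have hpd : adjoint S = adjoint V * absOp (adjoint S) := by
    rw [habs, ← star_eq_adjoint, ← star_eq_adjoint, star_S_eq h]
    exact (e2 (star V)).symm
  have hpi : IsPartialIsometryOp (adjoint V) := by
    constructor
    · rw [adjoint_adjoint, ← star_eq_adjoint]
      simp only [IsSelfAdjoint, star_mul, star_star]
    · rw [adjoint_adjoint, ← star_eq_adjoint]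
      exact pi_idem_F h5
  have hproj : adjoint (adjoint V) * adjoint V = rangeProjOp (adjoint (adjoint S)) := by
    rw [adjoint_adjoint, adjoint_adjoint, ← star_eq_adjoint]
    exact mul_star_eq_rangeProj h
  exact ⟨hpd, hpi, hproj⟩

lemma nCentered_adjoint {T U : H →L[ℂ] H} {m : ℕ} (h : IsNCentered m T U) :
    IsNCentered m (adjoint T) (adjoint U) := by
  intro k h1 h2
  have := polar_adjoint (h k h1 h2)
  simp only [← star_eq_adjoint, star_pow] at this ⊢
  exact this

lemma part1 {T U : H →L[ℂ] H} {n : ℕ} (hc : IsNCentered (n+1) T U) {k : ℕ}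
    (hk1 : 1 ≤ k) (hkn : k ≤ n) :
    (U^k * adjoint (U^k)) * absOp T = absOp T * (U^k * adjoint (U^k)) := by
  have hc1 : IsPolarDecompositionOp T U := by
    have := hc 1 le_rfl (by omega)
    rwa [pow_one, pow_one] at this
  have hck : IsPolarDecompositionOp (T^k) (U^k) := hc k hk1 (by omega)
  have hck1 : IsPolarDecompositionOp (T^(k+1)) (U^(k+1)) := hc (k+1) (by omega) (by omega)
  set A := absOp T with hAdef
  set V := U^k with hVdef
  set W := U^(k+1) with hWdef
  have hWUV : W = U * V := pow_succ' U k
  have hTT : T^(k+1) = T * T^k := pow_succ' T k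
  have h5V : V * (star V * V) = V := pi_of_polar hck
  have hUsa : IsSelfAdjoint (star U * U) := by rw [star_eq_adjoint]; exact hc1.2.1.1
  have hUid : (star U * U) * (star U * U) = star U * U := by
    simp only [star_eq_adjoint]; exact hc1.2.1.2
  have hWpi : (U * V) * (star (U * V) * (U * V)) = U * V := by
    rw [← hWUV]; exact pi_of_polar hck1
  have hcomm : (star U * U) * (V * star V) = (V * star V) * (star U * U) :=
    hw_comm hUsa hUid h5V hWpi
  have hFV : (V * star V) * V = V := by rw [mul_assoc]; exact h5V
  have e3 : V * (star W * W) = star U * W := by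
    rw [hWUV, star_mul]
    calc V * ((star V * star U) * (U * V)) = ((V * star V) * (star U * U)) * V := by
          simp only [mul_assoc]
    _ = ((star U * U) * (V * star V)) * V := by rw [hcomm]
    _ = (star U * U) * ((V * star V) * V) := by simp only [mul_assoc]
    _ = (star U * U) * V := by rw [hFV]
    _ = star U * (U * V) := by simp only [mul_assoc]
  have hA_abs : (star U * U) * A = A := proj_mul_abs hc1
  have trUA : ∀ x, U * (A * x) = T * x := fun x => tri hc1.1.symm x
  have trPA : ∀ x, star U * (U * (A * x)) = A * x := fun x => by
    rw [← mul_assoc]; exact tri hA_abs x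
  have f4 : absOp (T^(k+1)) = star V * (A * T^k) := by
    calc absOp (T^(k+1)) = star W * T^(k+1) := (star_mul_eq_abs hck1).symm
    _ = (star V * star U) * (T * T^k) := by rw [hWUV, star_mul, hTT]
    _ = star V * (star U * (T * T^k)) := by simp only [mul_assoc]
    _ = star V * (star U * (U * (A * T^k))) := by rw [trUA (T^k)]
    _ = star V * (A * T^k) := by rw [trPA (T^k)]
  have hA_eq : A = star U * T := (star_mul_eq_abs hc1).symm
  have f5 : A * T^k = star U * T^(k+1) := by
    calc A * T^k = (star U * T) * T^k := by rw [← hA_eq]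
    _ = star U * (T * T^k) := by rw [mul_assoc]
    _ = star U * T^(k+1) := by rw [← hTT]
  have pk1A : (star W * W) * absOp (T^(k+1)) = absOp (T^(k+1)) := proj_mul_abs hck1
  have g1 : (V * star V) * (A * T^k) = A * T^k := by
    calc (V * star V) * (A * T^k) = V * (star V * (A * T^k)) := by rw [mul_assoc]
    _ = V * absOp (T^(k+1)) := by rw [← f4]
    _ = V * ((star W * W) * absOp (T^(k+1))) := by rw [pk1A]
    _ = (V * (star W * W)) * absOp (T^(k+1)) := by simp only [mul_assoc]
    _ = (star U * W) * absOp (T^(k+1)) := by rw [e3]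
    _ = star U * T^(k+1) := by rw [mul_assoc, ← hck1.1]
    _ = A * T^k := f5.symm
  have hTk : T^k = V * absOp (T^k) := hck.1
  have g2 : (((V * star V) * A) * V) * absOp (T^k) = (A * V) * absOp (T^k) := by
    rw [hTk] at g1
    simp only [mul_assoc] at g1 ⊢
    exact g1
  have g3 := mul_rangeProj_congr g2
  rw [rangeProj_eq_proj hck] at g3
  have g4 : (V * star V) * (A * (V * star V)) = A * (V * star V) := by
    have h' := congrArg (fun x => x * star V) g3
    simp only [mul_assoc] at h'
    rw [pi_star_mul h5V] at h'
    simp only [mul_assoc]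
    exact h'
  have hAsa : star A = A := (absOp_sa T).star_eq
  have hQsa : star (V * star V) = V * star V := by simp [star_mul, star_star]
  have g5 : (V * star V) * (A * (V * star V)) = (V * star V) * A := by
    have h'' := congrArg star g4
    simp only [star_mul, hAsa, star_star, mul_assoc] at h''
    simp only [mul_assoc]
    exact h''
  have hfin : (V * star V) * A = A * (V * star V) := by rw [← g5, g4]
  simp only [← star_eq_adjoint]
  exact hfin

end PolarAux

/-- If `T` is `(n+1)`-centered, then `U^k(U^k)^*` commutes with `|T|` and
`(U^k)^* U^k` commutes with `|T^*|` for `1 ≤ k ≤ n`. -/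
theorem commute_proj_absOp_of_isNCentered (T U : H →L[ℂ] H)
    (hT : IsPolarDecompositionOp T U) (n : ℕ)
    (hc : IsNCentered (n + 1) T U) :
    ∀ k : ℕ, 1 ≤ k → k ≤ n →
      Commute (U ^ k * adjoint (U ^ k)) (absOp T) ∧
      Commute (adjoint (U ^ k) * U ^ k) (absOp (adjoint T)) := by
  intro k hk1 hkn
  constructor
  · exact PolarAux.part1 hc hk1 hkn
  · have hc' := PolarAux.nCentered_adjoint hc
    have h2 := PolarAux.part1 hc' hk1 hkn
    show (adjoint (U^k) * U^k) * absOp (adjoint T) = absOp (adjoint T) * (adjoint (U^k) * U^k)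
    simp only [← star_eq_adjoint, star_pow, star_star] at h2 ⊢
    exact h2
end

section
/- Let T be a bounded operator on a complex Hilbert space H with Moore–Penrose inverse T† and polar decomposition T = U|T|, and let n ∈ ℕ be such that T is n-centered. Then for every k with 1 ≤ k ≤ n, T^k has a Moore–Penrose inverse and (T^k)† = (T†)^k (i.e. (T†)^k satisfies the four Penrose equations for T^k). -/
open ContinuousLinearMap

variable {H : Type*} [NormedAddCommGroup H] [InnerProductSpace ℂ H] [CompleteSpace H]

/-- `X` is the Moore--Penrose inverse of `T`: the four Penrose equations hold. -/
def IsMoorePenroseInv (T X : H →L[ℂ] H) : Prop :=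
  T * X * T = T ∧ X * T * X = X ∧ IsSelfAdjoint (T * X) ∧ IsSelfAdjoint (X * T)


section AuxLemmas

/-! ### Pure algebra lemmas in a C⋆-setting -/

private lemma star_triple {W : H →L[ℂ] H}
    (h : (star W * W) * (star W * W) = star W * W) :
    W * (star W * W) = W := by
  have key : star (W * (star W * W) - W) * (W * (star W * W) - W) = 0 := by
    have expand : star (W * (star W * W) - W) * (W * (star W * W) - W)
        = (star W * W) * (star W * W) * (star W * W) - (star W * W) * (star W * W)
            - ((star W * W) * (star W * W) - star W * W) := by
      simp only [star_sub, star_mul, star_star]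
      noncomm_ring
    rw [expand, h, h]
    simp
  have := (CStarRing.star_mul_self_eq_zero_iff _).mp key
  have h2 : W * (star W * W) - W = 0 := this
  rw [sub_eq_zero] at h2
  exact h2

private lemma star_triple' {W : H →L[ℂ] H}
    (h : (W * star W) * (W * star W) = W * star W) :
    (W * star W) * W = W := by
  have h1 : star W * (star (star W) * star W) = star W :=
    star_triple (W := star W) (by simpa [star_star] using h)
  rw [star_star] at h1
  have := congrArg star h1
  simpa [star_mul, star_star, mul_assoc] using this

private lemma hw_core {e f : H →L[ℂ] H} (hesa : star e = e) (hfsa : star f = f)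
    (he : e * e = e) (hf : f * f = f)
    (hstar : f * e * f * e * f = f * e * f) : e * f = f * e := by
  -- `w = f*e*f` is idempotent
  have hw2 : (f * e * f) * (f * e * f) = f * e * f := by
    have h1 : (f * e * f) * (f * e * f) = f * e * (f * f) * e * f := by noncomm_ring
    rw [h1, hf]
    exact hstar
  -- `v = f*e` satisfies `v v* = w`, hence `v v* v = v`
  have hvv : (f * e) * star (f * e) = f * e * f := by
    have h1 : star (f * e) = e * f := by rw [star_mul, hesa, hfsa]
    rw [h1]
    have h2 : f * e * (e * f) = f * (e * e) * f := by noncomm_ring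
    rw [h2, he]
  have hv : (f * e) * star (f * e) * (f * e) = f * e :=
    star_triple' (W := f * e) (by rw [hvv]; exact hw2)
  -- (**) : f*e*f*e = f*e
  have hss : f * e * f * e = f * e := by
    have h1 : (f * e * f) * (f * e) = f * e := by rw [← hvv]; exact hv
    have h2 : (f * e * f) * (f * e) = f * e * (f * f) * e := by noncomm_ring
    rw [h2, hf] at h1
    exact h1
  -- `m = e*f*e` is idempotent
  have hm2 : (e * f * e) * (e * f * e) = e * f * e := by
    have h1 : (e * f * e) * (e * f * e) = e * f * (e * e) * f * e := by noncomm_ring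
    rw [h1, he]
    calc e * f * e * f * e = e * (f * e * f * e) := by noncomm_ring
      _ = e * (f * e) := by rw [hss]
      _ = e * f * e := by noncomm_ring
  have hmfm : (e * f * e) * f * (e * f * e) = e * f * e := by
    have h1 : (e * f * e) * f * (e * f * e) = e * (f * e * f * e) * (f * e) := by noncomm_ring
    rw [h1, hss]
    calc e * (f * e) * (f * e) = e * (f * e * f * e) := by noncomm_ring
      _ = e * (f * e) := by rw [hss]
      _ = e * f * e := by noncomm_ring
  -- f * m = m
  have hsa_m : star (e * f * e) = e * f * e := by
    simp only [star_mul, hesa, hfsa, mul_assoc]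
  have hfm : f * (e * f * e) = e * f * e := by
    have key : star ((e * f * e) - f * (e * f * e)) * ((e * f * e) - f * (e * f * e)) = 0 := by
      have expand : star ((e * f * e) - f * (e * f * e)) * ((e * f * e) - f * (e * f * e))
          = (e * f * e) * (e * f * e) - (e * f * e) * f * (e * f * e)
            - ((e * f * e) * f * (e * f * e) - (e * f * e) * (f * f) * (e * f * e)) := by
        simp only [star_sub, star_mul, hesa, hfsa, hsa_m]
        noncomm_ring
      rw [expand, hf, hm2, hmfm]
      simp
    have h4 := (CStarRing.star_mul_self_eq_zero_iff _).mp key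
    have h5 : (e * f * e) - f * (e * f * e) = 0 := h4
    rw [sub_eq_zero] at h5
    exact h5.symm
  -- conclude
  have hfe : f * e = e * f * e := by
    calc f * e = f * e * f * e := hss.symm
      _ = f * (e * f * e) := by noncomm_ring
      _ = e * f * e := hfm
  have hef : e * f = e * f * e := by
    have := congrArg star hfe
    rw [star_mul, hesa, hfsa, hsa_m] at this
    exact this
  rw [hef, hfe]

private lemma adjoint_mul' (A B : H →L[ℂ] H) :
    adjoint (A * B) = adjoint B * adjoint A := by
  rw [← star_eq_adjoint, star_mul, star_eq_adjoint, star_eq_adjoint]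

private lemma pi_triple {W : H →L[ℂ] H} (hW : IsPartialIsometryOp W) :
    W * (adjoint W * W) = W := by
  have := star_triple (W := W) (by rw [star_eq_adjoint]; exact hW.2)
  rwa [star_eq_adjoint] at this

private lemma pi_triple_adj {W : H →L[ℂ] H} (hW : IsPartialIsometryOp W) :
    adjoint W * W * adjoint W = adjoint W := by
  have h0 := congrArg adjoint (pi_triple hW)
  rw [adjoint_mul', adjoint_mul', adjoint_adjoint] at h0
  exact h0

private lemma hw {A B : H →L[ℂ] H} (hA : IsPartialIsometryOp A)
    (hB : IsPartialIsometryOp B) (hAB : IsPartialIsometryOp (A * B)) :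
    (adjoint A * A) * (B * adjoint B) = (B * adjoint B) * (adjoint A * A) := by
  have tB : B * (adjoint B * B) = B := pi_triple hB
  have hesa : star (adjoint A * A) = adjoint A * A := by
    rw [star_mul, star_eq_adjoint, star_eq_adjoint, adjoint_adjoint]
  have hfsa : star (B * adjoint B) = B * adjoint B := by
    rw [star_mul, star_eq_adjoint, star_eq_adjoint, adjoint_adjoint]
  have hf : (B * adjoint B) * (B * adjoint B) = B * adjoint B := by
    have h1 : (B * adjoint B) * (B * adjoint B) = (B * (adjoint B * B)) * adjoint B := by
      noncomm_ring
    rw [h1, tB]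
  have hr := hAB.2
  rw [adjoint_mul'] at hr
  have key := congrArg (fun Z : H →L[ℂ] H => B * Z * adjoint B) hr
  have lhs_eq : B * ((adjoint B * adjoint A * (A * B)) * (adjoint B * adjoint A * (A * B)))
        * adjoint B
      = (B * adjoint B) * (adjoint A * A) * (B * adjoint B) * (adjoint A * A)
        * (B * adjoint B) := by noncomm_ring
  have rhs_eq : B * (adjoint B * adjoint A * (A * B)) * adjoint B
      = (B * adjoint B) * (adjoint A * A) * (B * adjoint B) := by noncomm_ring
  rw [lhs_eq, rhs_eq] at key
  exact hw_core hesa hfsa hA.2 hf key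

/-! ### Range projection lemmas -/

private lemma rangeProjOp_apply_mem (S : H →L[ℂ] H) (x : H) :
    rangeProjOp S x ∈ (LinearMap.range (S : H →ₗ[ℂ] H)).topologicalClosure := by
  simpa [rangeProjOp] using
    ((Submodule.orthogonalProjectionOnto (LinearMap.range (S : H →ₗ[ℂ] H)).topologicalClosure) x).2

private lemma rangeProjOp_apply_of_mem {S : H →L[ℂ] H} {x : H}
    (hx : x ∈ (LinearMap.range (S : H →ₗ[ℂ] H)).topologicalClosure) : rangeProjOp S x = x := by
  exact Submodule.starProjection_eq_self_iff.mpr hx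

private lemma rangeProjOp_isSelfAdjoint (S : H →L[ℂ] H) :
    IsSelfAdjoint (rangeProjOp S) :=
  isSelfAdjoint_starProjection _

private lemma mem_closure_range (S : H →L[ℂ] H) (x : H) :
    S x ∈ (LinearMap.range (S : H →ₗ[ℂ] H)).topologicalClosure :=
  Submodule.le_topologicalClosure _ (LinearMap.mem_range_self _ x)

private lemma closure_range_subset {S : H →L[ℂ] H} {C : Set H} (hC : IsClosed C)
    (h : ∀ x, S x ∈ C) {y : H} (hy : y ∈ (LinearMap.range (S : H →ₗ[ℂ] H)).topologicalClosure) : y ∈ C := by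
  have h1 : (LinearMap.range (S : H →ₗ[ℂ] H) : Set H) ⊆ C := by
    rintro _ ⟨x, rfl⟩; exact h x
  have h2 : y ∈ closure (LinearMap.range (S : H →ₗ[ℂ] H) : Set H) := by
    rwa [← Submodule.topologicalClosure_coe]
  exact closure_minimal h1 hC h2

private lemma eq_rangeProjOp {S e : H →L[ℂ] H} (hsa : IsSelfAdjoint e)
    (hfix : e * S = S)
    (hran : ∀ x, e x ∈ (LinearMap.range (S : H →ₗ[ℂ] H)).topologicalClosure) :
    e = rangeProjOp S := by
  have h1 : rangeProjOp S * e = e := by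
    ext x
    simpa [mul_apply] using rangeProjOp_apply_of_mem (hran x)
  have h2 : e * rangeProjOp S = rangeProjOp S := by
    ext x
    have hfixpt : ∀ y ∈ (LinearMap.range (S : H →ₗ[ℂ] H)).topologicalClosure, e y = y := by
      intro y hy
      refine closure_range_subset (C := {y | e y = y})
        (isClosed_eq e.continuous continuous_id) (fun z => ?_) hy
      have := congrArg (fun F : H →L[ℂ] H => F z) hfix
      simpa [mul_apply] using this
    simpa [mul_apply] using hfixpt _ (rangeProjOp_apply_mem S x)
  have h3 : e * rangeProjOp S = e := by
    have := congrArg star h1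
    rwa [star_mul, hsa.star_eq, (rangeProjOp_isSelfAdjoint S).star_eq] at this
  rw [← h2, h3]

private lemma commute_rangeProjOp {S A : H →L[ℂ] H} (hsa : IsSelfAdjoint A)
    (h : ∀ x, A (S x) ∈ (LinearMap.range (S : H →ₗ[ℂ] H)).topologicalClosure) :
    A * rangeProjOp S = rangeProjOp S * A := by
  have hmaps : ∀ y ∈ (LinearMap.range (S : H →ₗ[ℂ] H)).topologicalClosure,
      A y ∈ (LinearMap.range (S : H →ₗ[ℂ] H)).topologicalClosure := by
    intro y hy
    refine closure_range_subset
      (C := A ⁻¹' ((LinearMap.range (S : H →ₗ[ℂ] H)).topologicalClosure : Set H)) ?_ (fun z => h z) hy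
    exact (Submodule.isClosed_topologicalClosure _).preimage A.continuous
  have h1 : rangeProjOp S * (A * rangeProjOp S) = A * rangeProjOp S := by
    ext x
    simpa [mul_apply] using
      rangeProjOp_apply_of_mem (hmaps _ (rangeProjOp_apply_mem S x))
  have h2 := congrArg star h1
  rw [star_mul, star_mul, hsa.star_eq, (rangeProjOp_isSelfAdjoint S).star_eq] at h2
  -- h2 : (rangeProjOp S * A) * rangeProjOp S = rangeProjOp S * A
  calc A * rangeProjOp S = rangeProjOp S * (A * rangeProjOp S) := h1.symm
    _ = (rangeProjOp S * A) * rangeProjOp S := by rw [mul_assoc]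
    _ = rangeProjOp S * A := h2

/-! ### absOp lemmas -/

private lemma adjoint_mul_self_nonneg (S : H →L[ℂ] H) : (0 : H →L[ℂ] H) ≤ adjoint S * S := by
  rw [← star_eq_adjoint]; exact star_mul_self_nonneg S

private lemma absOp_nonneg (S : H →L[ℂ] H) : 0 ≤ absOp S :=
  cfc_nonneg fun x _ => Real.sqrt_nonneg x

private lemma absOp_isSelfAdjoint (S : H →L[ℂ] H) : IsSelfAdjoint (absOp S) :=
  .of_nonneg (absOp_nonneg S)

private lemma absOp_adjoint_eq (S : H →L[ℂ] H) : adjoint (absOp S) = absOp S := by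
  rw [← star_eq_adjoint]; exact (absOp_isSelfAdjoint S).star_eq

private lemma absOp_sq (S : H →L[ℂ] H) : absOp S * absOp S = adjoint S * S := by
  have ha := adjoint_mul_self_nonneg S
  rw [absOp, ← cfc_mul Real.sqrt Real.sqrt (adjoint S * S)]
  have : cfc (fun x => Real.sqrt x * Real.sqrt x) (adjoint S * S)
      = cfc (id : ℝ → ℝ) (adjoint S * S) :=
    cfc_congr fun x hx => Real.mul_self_sqrt (spectrum_nonneg_of_nonneg ha hx)
  rw [this, cfc_id ℝ (adjoint S * S)]

private lemma sqrt_unique' {a b : H →L[ℂ] H} (hb : 0 ≤ b) (h : b * b = a) :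
    cfc Real.sqrt a = b := by
  have hbsa : IsSelfAdjoint b := .of_nonneg hb
  rw [← h]
  have h1 : b * b = cfc (fun x : ℝ => x * x) b := by
    rw [cfc_mul _ _ b, cfc_id' ℝ b]
  rw [h1, ← cfc_comp' Real.sqrt (fun x : ℝ => x * x) b]
  have : cfc (fun x : ℝ => Real.sqrt (x * x)) b = cfc (id : ℝ → ℝ) b :=
    cfc_congr fun x hx => Real.sqrt_mul_self (spectrum_nonneg_of_nonneg hb hx)
  rw [this, cfc_id ℝ b]

private lemma absOp_apply_mem (S : H →L[ℂ] H) (x : H) :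
    absOp S x ∈ (LinearMap.range (adjoint S : H →ₗ[ℂ] H)).topologicalClosure := by
  rw [← Submodule.orthogonal_orthogonal_eq_closure]
  refine (Submodule.mem_orthogonal _ _).mpr fun y hy => ?_
  -- y ∈ (range S†)ᗮ; first show S y = 0
  have hSy : S y = 0 := by
    have h1 : (inner ℂ (adjoint S (S y)) y : ℂ) = 0 :=
      (Submodule.mem_orthogonal _ y).mp hy _ (LinearMap.mem_range_self _ (S y))
    have h2 : (inner ℂ (S y) (S y) : ℂ) = 0 := by rwa [adjoint_inner_left] at h1
    exact inner_self_eq_zero.mp h2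
  have hAy : absOp S y = 0 := by
    have h4 : (inner ℂ (absOp S y) (absOp S y) : ℂ) = inner ℂ y ((absOp S * absOp S) y) := by
      rw [ContinuousLinearMap.mul_apply]
      nth_rewrite 1 [← absOp_adjoint_eq S]
      rw [adjoint_inner_left]
    have h3 : (inner ℂ (absOp S y) (absOp S y) : ℂ) = 0 := by
      rw [h4, absOp_sq, ContinuousLinearMap.mul_apply, hSy, map_zero, inner_zero_right]
    exact inner_self_eq_zero.mp h3
  have h6 : (inner ℂ y (adjoint (absOp S) x) : ℂ) = inner ℂ (absOp S y) x :=
    adjoint_inner_right _ y x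
  rw [absOp_adjoint_eq] at h6
  rw [h6, hAy, inner_zero_left]

end AuxLemmas


section PolarLemmas

private lemma sa_q (W : H →L[ℂ] H) : IsSelfAdjoint (W * adjoint W) := by
  have h : star (W * adjoint W) = W * adjoint W := by
    rw [star_mul, star_eq_adjoint, star_eq_adjoint, adjoint_adjoint]
  exact h

private lemma sa_p (W : H →L[ℂ] H) : IsSelfAdjoint (adjoint W * W) := by
  have h : star (adjoint W * W) = adjoint W * W := by
    rw [star_mul, star_eq_adjoint, star_eq_adjoint, adjoint_adjoint]
  exact h

private lemma polar_pA {S W : H →L[ℂ] H} (hp : IsPolarDecompositionOp S W) :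
    (adjoint W * W) * absOp S = absOp S := by
  rw [hp.2.2]
  ext x
  simpa [mul_apply] using rangeProjOp_apply_of_mem (absOp_apply_mem S x)

private lemma polar_adjoint_eq {S W : H →L[ℂ] H} (hp : IsPolarDecompositionOp S W) :
    adjoint S = absOp S * adjoint W := by
  nth_rewrite 1 [hp.1]
  rw [adjoint_mul', absOp_adjoint_eq]

private lemma polar_A_eq {S W : H →L[ℂ] H} (hp : IsPolarDecompositionOp S W) :
    absOp S = adjoint W * S := by
  nth_rewrite 2 [hp.1]
  rw [← mul_assoc, polar_pA hp]

private lemma polar_maps_closure {S W : H →L[ℂ] H} (hp : IsPolarDecompositionOp S W)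
    {v : H} (hv : v ∈ (LinearMap.range (adjoint S : H →ₗ[ℂ] H)).topologicalClosure) :
    W v ∈ (LinearMap.range (S : H →ₗ[ℂ] H)).topologicalClosure := by
  have hWS : W * adjoint S = S * adjoint W := by
    rw [polar_adjoint_eq hp, ← mul_assoc, ← hp.1]
  refine closure_range_subset (S := adjoint S)
    (C := W ⁻¹' ((LinearMap.range (S : H →ₗ[ℂ] H)).topologicalClosure : Set H)) ?_ ?_ hv
  · exact (Submodule.isClosed_topologicalClosure _).preimage W.continuous
  · intro z
    have h1 : W (adjoint S z) = S (adjoint W z) := by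
      have := congrArg (fun F : H →L[ℂ] H => F z) hWS
      simpa [mul_apply] using this
    show W (adjoint S z) ∈ ((LinearMap.range (S : H →ₗ[ℂ] H)).topologicalClosure : Set H)
    rw [h1]
    exact mem_closure_range S (adjoint W z)

private lemma polar_q_eq {S W : H →L[ℂ] H} (hp : IsPolarDecompositionOp S W) :
    W * adjoint W = rangeProjOp S := by
  have htriple : (W * adjoint W) * W = W := by
    rw [mul_assoc]; exact pi_triple hp.2.1
  refine eq_rangeProjOp (sa_q W) ?_ ?_
  · nth_rewrite 1 [hp.1]
    rw [← mul_assoc, htriple, ← hp.1]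
  · intro x
    have h0 := pi_triple_adj hp.2.1
    have h1 : adjoint W x = (adjoint W * W) (adjoint W x) := by
      conv_lhs => rw [← h0]
      simp [mul_apply]
    have h2 : adjoint W x ∈ (LinearMap.range (adjoint S : H →ₗ[ℂ] H)).topologicalClosure := by
      rw [h1, hp.2.2]
      exact rangeProjOp_apply_mem _ _
    have h3 : (W * adjoint W) x = W (adjoint W x) := by simp [mul_apply]
    rw [h3]
    exact polar_maps_closure hp h2

private lemma polar_absOp_adjoint {S W : H →L[ℂ] H} (hp : IsPolarDecompositionOp S W) :
    absOp (adjoint S) = W * absOp S * adjoint W := by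
  have hnn : 0 ≤ W * absOp S * adjoint W := by
    have h := star_left_conjugate_nonneg (absOp_nonneg S) (adjoint W)
    rw [star_eq_adjoint, adjoint_adjoint] at h
    exact h
  have hS : S * adjoint S = W * (adjoint S * S) * adjoint W := by
    calc S * adjoint S = (W * absOp S) * (absOp S * adjoint W) := by
          rw [← hp.1, ← polar_adjoint_eq hp]
      _ = W * (absOp S * absOp S) * adjoint W := by noncomm_ring
      _ = W * (adjoint S * S) * adjoint W := by rw [absOp_sq]
  have habs : absOp (adjoint S) = cfc Real.sqrt (S * adjoint S) := by
    rw [absOp, adjoint_adjoint]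
  rw [habs]
  refine sqrt_unique' hnn ?_
  calc (W * absOp S * adjoint W) * (W * absOp S * adjoint W)
      = W * absOp S * ((adjoint W * W) * absOp S) * adjoint W := by noncomm_ring
    _ = W * absOp S * absOp S * adjoint W := by rw [polar_pA hp]
    _ = W * (adjoint S * S) * adjoint W := by
        rw [mul_assoc W (absOp S) (absOp S), absOp_sq]
    _ = S * adjoint S := hS.symm

private lemma polar_adjoint {S W : H →L[ℂ] H} (hp : IsPolarDecompositionOp S W) :
    IsPolarDecompositionOp (adjoint S) (adjoint W) := by
  refine ⟨?_, ⟨?_, ?_⟩, ?_⟩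
  · rw [polar_absOp_adjoint hp]
    calc adjoint S = absOp S * adjoint W := polar_adjoint_eq hp
      _ = ((adjoint W * W) * absOp S) * adjoint W := by rw [polar_pA hp]
      _ = adjoint W * (W * absOp S * adjoint W) := by noncomm_ring
  · rw [adjoint_adjoint]
    exact sa_q W
  · rw [adjoint_adjoint]
    calc (W * adjoint W) * (W * adjoint W) = (W * (adjoint W * W)) * adjoint W := by
          noncomm_ring
      _ = W * adjoint W := by rw [pi_triple hp.2.1]
  · rw [adjoint_adjoint, adjoint_adjoint]
    exact polar_q_eq hp

private lemma mp_TX {T X : H →L[ℂ] H} (hX : IsMoorePenroseInv T X) :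
    T * X = rangeProjOp T := by
  refine eq_rangeProjOp hX.2.2.1 hX.1 fun x => ?_
  have h1 : (T * X) x = T (X x) := by simp [mul_apply]
  rw [h1]
  exact mem_closure_range T (X x)

private lemma mp_adjoint {T X : H →L[ℂ] H} (hX : IsMoorePenroseInv T X) :
    IsMoorePenroseInv (adjoint T) (adjoint X) := by
  refine ⟨?_, ?_, ?_, ?_⟩
  · have h := congrArg adjoint hX.1
    rw [adjoint_mul', adjoint_mul', ← mul_assoc] at h
    exact h
  · have h := congrArg adjoint hX.2.1
    rw [adjoint_mul', adjoint_mul', ← mul_assoc] at h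
    exact h
  · have h1 : adjoint T * adjoint X = adjoint (X * T) := (adjoint_mul' X T).symm
    rw [h1, ← star_eq_adjoint, hX.2.2.2.star_eq]
    exact hX.2.2.2
  · have h1 : adjoint X * adjoint T = adjoint (T * X) := (adjoint_mul' T X).symm
    rw [h1, ← star_eq_adjoint, hX.2.2.1.star_eq]
    exact hX.2.2.1

end PolarLemmas


section MainPhases

variable {T X U : H →L[ℂ] H} {n : ℕ}

private lemma adjoint_pow' (W : H →L[ℂ] H) (m : ℕ) : adjoint (W ^ m) = (adjoint W) ^ m := by
  rw [← star_eq_adjoint, star_pow, star_eq_adjoint]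

/-- Chain lemma: `(U*U) U^j = U^j (U^(j+1)* U^(j+1))` for `j+1 ≤ n`. -/
private lemma chain_p (hT : IsPolarDecompositionOp T U) (hc : IsNCentered n T U) :
    ∀ j : ℕ, j + 1 ≤ n →
      (adjoint U * U) * U ^ j = U ^ j * (adjoint (U ^ (j + 1)) * U ^ (j + 1)) := by
  intro j
  induction j with
  | zero => intro _; simp [pow_zero, pow_one]
  | succ j ih =>
    intro hj2
    have hj1 : j + 1 ≤ n := by omega
    have hpi1 : IsPartialIsometryOp U := hT.2.1
    have hpiJ : IsPartialIsometryOp (U ^ (j + 1)) := (hc (j + 1) (by omega) hj1).2.1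
    have hpiJ2 : IsPartialIsometryOp (U ^ (j + 1) * U) := by
      rw [← pow_succ]; exact (hc (j + 1 + 1) (by omega) hj2).2.1
    have hcomm := hw hpiJ hpi1 hpiJ2
    have hSS : (adjoint (U ^ (j + 1)) * U ^ (j + 1)) * U
        = U * (adjoint (U ^ (j + 1 + 1)) * U ^ (j + 1 + 1)) := by
      have e1 : U ^ (j + 1 + 1) = U ^ (j + 1) * U := by rw [pow_succ]
      rw [e1, adjoint_mul']
      calc (adjoint (U ^ (j + 1)) * U ^ (j + 1)) * U
          = (adjoint (U ^ (j + 1)) * U ^ (j + 1)) * (U * (adjoint U * U)) := by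
            rw [pi_triple hpi1]
        _ = ((adjoint (U ^ (j + 1)) * U ^ (j + 1)) * (U * adjoint U)) * U := by noncomm_ring
        _ = ((U * adjoint U) * (adjoint (U ^ (j + 1)) * U ^ (j + 1))) * U := by rw [hcomm]
        _ = U * (adjoint U * adjoint (U ^ (j + 1)) * (U ^ (j + 1) * U)) := by noncomm_ring
    calc (adjoint U * U) * U ^ (j + 1)
        = ((adjoint U * U) * U ^ j) * U := by rw [pow_succ]; noncomm_ring
      _ = (U ^ j * (adjoint (U ^ (j + 1)) * U ^ (j + 1))) * U := by rw [ih hj1]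
      _ = U ^ j * ((adjoint (U ^ (j + 1)) * U ^ (j + 1)) * U) := by rw [mul_assoc]
      _ = U ^ j * (U * (adjoint (U ^ (j + 1 + 1)) * U ^ (j + 1 + 1))) := by rw [hSS]
      _ = U ^ (j + 1) * (adjoint (U ^ (j + 1 + 1)) * U ^ (j + 1 + 1)) := by
          rw [← mul_assoc, ← pow_succ]

/-- The key identity `|T| T^k = T^k B_k`. -/
private lemma key_identity (hT : IsPolarDecompositionOp T U) (hc : IsNCentered n T U)
    {k : ℕ} (hk1 : 1 ≤ k) (hk : k + 1 ≤ n) :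
    absOp T * T ^ k = T ^ k * (adjoint (U ^ k) * absOp T * U ^ k) := by
  have hck := hc k hk1 (by omega)
  have hpk1 := hc (k + 1) (by omega) hk
  have hadjsucc : adjoint (U ^ (k + 1)) = adjoint (U ^ k) * adjoint U := by
    rw [pow_succ']
    exact adjoint_mul' U (U ^ k)
  have hTfac : T * T ^ k = (U * absOp T) * (U ^ k * absOp (T ^ k)) := by
    rw [← hT.1, ← hck.1]
  have hBsa : star (adjoint (U ^ k) * absOp T * U ^ k)
      = adjoint (U ^ k) * absOp T * U ^ k := by
    simp only [star_mul, star_eq_adjoint, adjoint_adjoint, absOp_adjoint_eq, mul_assoc]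
  have R1 : absOp (T ^ (k + 1)) = (adjoint (U ^ k) * absOp T * U ^ k) * absOp (T ^ k) := by
    calc absOp (T ^ (k + 1))
        = (adjoint (U ^ (k + 1)) * U ^ (k + 1)) * absOp (T ^ (k + 1)) :=
          (polar_pA hpk1).symm
      _ = adjoint (U ^ (k + 1)) * T ^ (k + 1) := by rw [mul_assoc, ← hpk1.1]
      _ = adjoint (U ^ (k + 1)) * (T * T ^ k) := by rw [pow_succ' T k]
      _ = (adjoint (U ^ k) * adjoint U) * ((U * absOp T) * (U ^ k * absOp (T ^ k))) := by
          rw [hTfac, hadjsucc]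
      _ = (adjoint (U ^ k) * ((adjoint U * U) * absOp T)) * (U ^ k * absOp (T ^ k)) := by
          noncomm_ring
      _ = (adjoint (U ^ k) * absOp T) * (U ^ k * absOp (T ^ k)) := by rw [polar_pA hT]
      _ = (adjoint (U ^ k) * absOp T * U ^ k) * absOp (T ^ k) := by noncomm_ring
  have R1' : absOp (T ^ (k + 1)) = absOp (T ^ k) * (adjoint (U ^ k) * absOp T * U ^ k) := by
    have h := congrArg star R1
    rw [(absOp_isSelfAdjoint (T ^ (k + 1))).star_eq, star_mul, hBsa,
      (absOp_isSelfAdjoint (T ^ k)).star_eq] at h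
    exact h
  have key_eq : absOp T * T ^ k = U ^ k * absOp (T ^ (k + 1)) := by
    calc absOp T * T ^ k = (adjoint U * T) * T ^ k := by rw [← polar_A_eq hT]
      _ = adjoint U * T ^ (k + 1) := by rw [mul_assoc, ← pow_succ']
      _ = adjoint U * (U ^ (k + 1) * absOp (T ^ (k + 1))) := by rw [← hpk1.1]
      _ = ((adjoint U * U) * U ^ k) * absOp (T ^ (k + 1)) := by
          rw [pow_succ']; noncomm_ring
      _ = (U ^ k * (adjoint (U ^ (k + 1)) * U ^ (k + 1))) * absOp (T ^ (k + 1)) := by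
          rw [chain_p hT hc k hk]
      _ = U ^ k * ((adjoint (U ^ (k + 1)) * U ^ (k + 1)) * absOp (T ^ (k + 1))) := by
          rw [mul_assoc]
      _ = U ^ k * absOp (T ^ (k + 1)) := by rw [polar_pA hpk1]
  calc absOp T * T ^ k = U ^ k * absOp (T ^ (k + 1)) := key_eq
    _ = U ^ k * (absOp (T ^ k) * (adjoint (U ^ k) * absOp T * U ^ k)) := by rw [← R1']
    _ = (U ^ k * absOp (T ^ k)) * (adjoint (U ^ k) * absOp T * U ^ k) := by noncomm_ring
    _ = T ^ k * (adjoint (U ^ k) * absOp T * U ^ k) := by rw [← hck.1]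

private lemma key_commute (hT : IsPolarDecompositionOp T U) (hc : IsNCentered n T U)
    {k : ℕ} (hk1 : 1 ≤ k) (hk : k + 1 ≤ n) :
    absOp T * rangeProjOp (T ^ k) = rangeProjOp (T ^ k) * absOp T := by
  refine commute_rangeProjOp (absOp_isSelfAdjoint T) fun x => ?_
  have h1 : absOp T ((T ^ k) x) = (T ^ k) ((adjoint (U ^ k) * absOp T * U ^ k) x) := by
    have := congrArg (fun F : H →L[ℂ] H => F x) (key_identity hT hc hk1 hk)
    simpa [mul_apply] using this
  rw [h1]
  exact mem_closure_range (T ^ k) _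

/-- Phase 1: `T^k X^k = U^k (U^k)*`. -/
private lemma phase1 (hX : IsMoorePenroseInv T X) (hT : IsPolarDecompositionOp T U)
    (hc : IsNCentered n T U) :
    ∀ k : ℕ, 1 ≤ k → k ≤ n → T ^ k * X ^ k = U ^ k * adjoint (U ^ k) := by
  intro k hk1
  induction k, hk1 using Nat.le_induction with
  | base =>
    intro _
    simp only [pow_one]
    rw [mp_TX hX]
    exact (polar_q_eq hT).symm
  | succ k hk ihp =>
    intro hkn
    have hkn' : k ≤ n := by omega
    have ih := ihp hkn'
    have hck := hc k hk hkn'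
    have hAX : absOp T * X = adjoint U := by
      rw [polar_A_eq hT, mul_assoc, mp_TX hX, ← polar_q_eq hT, ← mul_assoc]
      exact pi_triple_adj hT.2.1
    have hcomm : absOp T * (U ^ k * adjoint (U ^ k))
        = (U ^ k * adjoint (U ^ k)) * absOp T := by
      rw [polar_q_eq hck]
      exact key_commute hT hc hk hkn
    calc T ^ (k + 1) * X ^ (k + 1) = (T * T ^ k) * (X ^ k * X) := by
          rw [pow_succ' T, pow_succ X]
      _ = T * (T ^ k * X ^ k) * X := by noncomm_ring
      _ = T * (U ^ k * adjoint (U ^ k)) * X := by rw [ih]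
      _ = (U * absOp T) * (U ^ k * adjoint (U ^ k)) * X := by nth_rewrite 1 [hT.1]; rfl
      _ = U * (absOp T * (U ^ k * adjoint (U ^ k))) * X := by noncomm_ring
      _ = U * ((U ^ k * adjoint (U ^ k)) * absOp T) * X := by rw [hcomm]
      _ = U * (U ^ k * adjoint (U ^ k)) * (absOp T * X) := by noncomm_ring
      _ = U * (U ^ k * adjoint (U ^ k)) * adjoint U := by rw [hAX]
      _ = U ^ (k + 1) * adjoint (U ^ (k + 1)) := by
          rw [pow_succ' U, adjoint_mul']
          noncomm_ring

/-- Phase 2: `X^k T^k = (U^k)* U^k`, via the adjoint system. -/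
private lemma phase2 (hX : IsMoorePenroseInv T X) (hT : IsPolarDecompositionOp T U)
    (hc : IsNCentered n T U) :
    ∀ k : ℕ, 1 ≤ k → k ≤ n → X ^ k * T ^ k = adjoint (U ^ k) * U ^ k := by
  intro k hk1 hkn
  have hX' := mp_adjoint hX
  have hT' := polar_adjoint hT
  have hc' : IsNCentered n (adjoint T) (adjoint U) := by
    intro m hm1 hmn
    have h := polar_adjoint (hc m hm1 hmn)
    rwa [adjoint_pow', adjoint_pow'] at h
  have h1 := phase1 hX' hT' hc' k hk1 hkn
  rw [← adjoint_pow', ← adjoint_pow', ← adjoint_pow', adjoint_adjoint] at h1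
  -- h1 : adjoint (T^k) * adjoint (X^k) = adjoint (U^k) * U^k
  have h2 : adjoint (X ^ k * T ^ k) = adjoint (U ^ k) * U ^ k := by
    rw [adjoint_mul']; exact h1
  have h3 := congrArg adjoint h2
  rw [adjoint_adjoint, adjoint_mul', adjoint_adjoint] at h3
  exact h3

/-- Phase 3: `X^k T^k X^k = X^k`. -/
private lemma phase3 (hX : IsMoorePenroseInv T X) (hT : IsPolarDecompositionOp T U)
    (hc : IsNCentered n T U) :
    ∀ k : ℕ, 1 ≤ k → k ≤ n → X ^ k * (T ^ k * X ^ k) = X ^ k := by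
  intro k hk1
  induction k, hk1 using Nat.le_induction with
  | base =>
    intro _
    simp only [pow_one]
    rw [← mul_assoc]
    exact hX.2.1
  | succ k hk ihp =>
    intro hkn
    have hkn' : k ≤ n := by omega
    have ih := ihp hkn'
    have hTX : T * X = U * adjoint U := (mp_TX hX).trans (polar_q_eq hT).symm
    have hb := phase2 hX hT hc k hk hkn'
    have hpi1 : IsPartialIsometryOp U := hT.2.1
    have hpiK : IsPartialIsometryOp (U ^ k) := (hc k hk hkn').2.1
    have hpiK1 : IsPartialIsometryOp (U ^ k * U) := by
      rw [← pow_succ]; exact (hc (k + 1) (by omega) hkn).2.1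
    have hcm := hw hpiK hpi1 hpiK1
    have hXTX : X * (T * X) = X := by rw [← mul_assoc]; exact hX.2.1
    calc X ^ (k + 1) * (T ^ (k + 1) * X ^ (k + 1))
        = (X * X ^ k) * ((T ^ k * T) * (X * X ^ k)) := by
          rw [pow_succ' X, pow_succ T]
      _ = X * ((X ^ k * T ^ k) * (T * X)) * X ^ k := by noncomm_ring
      _ = X * ((adjoint (U ^ k) * U ^ k) * (U * adjoint U)) * X ^ k := by rw [hb, hTX]
      _ = X * ((U * adjoint U) * (adjoint (U ^ k) * U ^ k)) * X ^ k := by rw [hcm]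
      _ = X * ((T * X) * (X ^ k * T ^ k)) * X ^ k := by rw [← hTX, ← hb]
      _ = (X * (T * X)) * ((X ^ k * T ^ k) * X ^ k) := by noncomm_ring
      _ = X * ((X ^ k * T ^ k) * X ^ k) := by rw [hXTX]
      _ = X * (X ^ k * (T ^ k * X ^ k)) := by rw [mul_assoc]
      _ = X * X ^ k := by rw [ih]
      _ = X ^ (k + 1) := (pow_succ' X k).symm

end MainPhases

/-- If `T` is M-P invertible with `T† = X` and `T` is `n`-centered, then `T^k`
is M-P invertible with `(T^k)† = (T†)^k` for `1 ≤ k ≤ n`. -/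
theorem moorePenrose_pow_of_isNCentered (T X U : H →L[ℂ] H)
    (hX : IsMoorePenroseInv T X) (hT : IsPolarDecompositionOp T U)
    (n : ℕ) (hc : IsNCentered n T U) :
    ∀ k : ℕ, 1 ≤ k → k ≤ n → IsMoorePenroseInv (T ^ k) (X ^ k) := by
  intro k hk1 hkn
  have ha := phase1 hX hT hc k hk1 hkn
  have hb := phase2 hX hT hc k hk1 hkn
  have hck := hc k hk1 hkn
  have hpi : IsPartialIsometryOp (U ^ k) := hck.2.1
  have htriple : (U ^ k * adjoint (U ^ k)) * U ^ k = U ^ k := by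
    rw [mul_assoc]; exact pi_triple hpi
  refine ⟨?_, ?_, ?_, ?_⟩
  · rw [ha]
    nth_rewrite 1 [hck.1]
    rw [← mul_assoc, htriple, ← hck.1]
  · rw [mul_assoc]
    exact phase3 hX hT hc k hk1 hkn
  · rw [ha]
    exact sa_q (U ^ k)
  · rw [hb]
    exact sa_p (U ^ k)
end
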